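/- Let F and G be cumulative distribution functions on the real line and let ε ≥ 0, δ ≥ 0. Then L_δ(F,G) ≤ ε if and only if Q_{α−ε}(F) − δ ≤ Q_α(G) ≤ Q_{α+ε}(F) + δ holds for all α ∈ ℝ (inequalities in the extended reals). In particular, L_δ(F,G) = inf{ε ≥ 0 : Q_{α−ε}(F) − δ ≤ Q_α(G) ≤ Q_{α+ε}(F) + δ for all α ∈ ℝ}. -/

import Mathlib

open Filter MeasureTheory Set

/-- A cumulative distribution function on ℝ: nondecreasing, right-continuous,
with limit 0 at -∞ and 1 at +∞. -/
def IsCDF (F : ℝ → ℝ) : Prop :=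
  Monotone F ∧ (∀ t : ℝ, ContinuousWithinAt F (Set.Ici t) t) ∧
    Tendsto F atBot (nhds 0) ∧ Tendsto F atTop (nhds 1)

/-- The Lévy gauge with tolerance `δ` between two cdfs. -/
noncomputable def levyGauge (δ : ℝ) (F G : ℝ → ℝ) : ℝ :=
  sInf {ε : ℝ | 0 ≤ ε ∧ ∀ t : ℝ, F (t - δ) - ε ≤ G t ∧ G t ≤ F (t + δ) + ε}

/-- The `α`-quantile `Q_α(F) := inf {x : ℝ | F x ≥ α}` as an extended real,
with `inf ∅ = +∞` (so `Q_α(F) = -∞` for `α ≤ 0` and `Q_α(F) = +∞` for `α > 1`). -/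
noncomputable def cdfQuantile (F : ℝ → ℝ) (α : ℝ) : EReal :=
  sInf ((fun x : ℝ => (x : EReal)) '' {x : ℝ | α ≤ F x})

lemma IsCDF.le_one {F : ℝ → ℝ} (hF : IsCDF F) (x : ℝ) : F x ≤ 1 :=
  ge_of_tendsto hF.2.2.2 (eventually_atTop.2 ⟨x, fun y hy => hF.1 hy⟩)

lemma IsCDF.nonneg {F : ℝ → ℝ} (hF : IsCDF F) (x : ℝ) : 0 ≤ F x :=
  le_of_tendsto hF.2.2.1 (eventually_atBot.2 ⟨x, fun y hy => hF.1 hy⟩)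

lemma quantile_le_of_mem {F : ℝ → ℝ} {α x : ℝ} (h : α ≤ F x) :
    cdfQuantile F α ≤ (x : EReal) :=
  sInf_le ⟨x, h, rfl⟩

lemma le_cdf_of_quantile_le {F : ℝ → ℝ} (hF : IsCDF F) {α y : ℝ} (hα : 0 < α)
    (h : cdfQuantile F α ≤ (y : EReal)) : α ≤ F y := by
  set S : Set ℝ := {x : ℝ | α ≤ F x} with hS
  have hne : S.Nonempty := by
    by_contra hc
    rw [Set.not_nonempty_iff_eq_empty] at hc
    simp only [cdfQuantile, ← hS, hc, Set.image_empty, sInf_empty] at h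
    exact absurd h (by simp)
  have hbd : BddBelow S := by
    have : ∀ᶠ x in atBot, F x < α := hF.2.2.1.eventually (Filter.Tendsto.eventually_lt_const hα tendsto_id) |>.mono (fun x hx => hx)
    obtain ⟨x₀, hx₀⟩ := eventually_atBot.1 this
    exact ⟨x₀, fun x hx => by
      by_contra hc
      exact absurd hx (not_le.2 (hx₀ x (le_of_not_ge hc)))⟩
  set m := sInf S with hm
  have hmS : ∀ x ∈ S, m ≤ x := fun x hx => csInf_le hbd hx
  have hmle : m ≤ y := by
    have : (m : EReal) ≤ cdfQuantile F α := by
      apply le_sInf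
      rintro b ⟨x, hx, rfl⟩
      show (m : EReal) ≤ (x : EReal)
      exact_mod_cast hmS x hx
    exact_mod_cast this.trans h
  have hFm : α ≤ F m := by
    have ht : Tendsto F (nhdsWithin m (Set.Ioi m)) (nhds (F m)) :=
      (hF.2.1 m).mono_left (nhdsWithin_mono m Set.Ioi_subset_Ici_self)
    refine ge_of_tendsto ht ?_
    filter_upwards [self_mem_nhdsWithin] with z hz
    obtain ⟨x, hx, hxz⟩ := exists_lt_of_csInf_lt hne hz
    exact le_trans hx (hF.1 hxz.le)
  exact hFm.trans (hF.1 hmle)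

lemma cdf_cond_iff_quantile_cond {F G : ℝ → ℝ} (hF : IsCDF F) (hG : IsCDF G)
    {ε δ : ℝ} (hε : 0 ≤ ε) (hδ : 0 ≤ δ) :
    (∀ t : ℝ, F (t - δ) - ε ≤ G t ∧ G t ≤ F (t + δ) + ε) ↔
      (∀ α : ℝ, cdfQuantile F (α - ε) - (δ : EReal) ≤ cdfQuantile G α ∧
        cdfQuantile G α ≤ cdfQuantile F (α + ε) + (δ : EReal)) := by
  constructor
  · intro h α
    constructor
    · apply le_sInf
      rintro b ⟨x, hx, rfl⟩
      rw [EReal.sub_le_iff_le_add (Or.inl (EReal.coe_ne_bot δ)) (Or.inl (EReal.coe_ne_top δ))]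
      have hmem : α - ε ≤ F (x + δ) := by
        have h2 := (h x).2
        have hx' : α ≤ G x := hx
        linarith
      calc cdfQuantile F (α - ε) ≤ ((x + δ : ℝ) : EReal) := quantile_le_of_mem hmem
        _ = (x : EReal) + (δ : EReal) := by exact_mod_cast EReal.coe_add x δ
    · rw [← EReal.sub_le_iff_le_add (Or.inl (EReal.coe_ne_bot δ)) (Or.inl (EReal.coe_ne_top δ))]
      apply le_sInf
      rintro b ⟨x, hx, rfl⟩
      rw [EReal.sub_le_iff_le_add (Or.inl (EReal.coe_ne_bot δ)) (Or.inl (EReal.coe_ne_top δ))]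
      have hmem : α ≤ G (x + δ) := by
        have h2 := (h (x + δ)).1
        simp only [add_sub_cancel_right] at h2
        have hx' : α + ε ≤ F x := hx
        linarith
      calc cdfQuantile G α ≤ ((x + δ : ℝ) : EReal) := quantile_le_of_mem hmem
        _ = (x : EReal) + (δ : EReal) := by exact_mod_cast EReal.coe_add x δ
  · intro h t
    constructor
    · by_contra hc
      push_neg at hc
      set α := F (t - δ) - ε with hα
      have hαpos : 0 < α := lt_of_le_of_lt (hG.nonneg t) hc
      have h1 : cdfQuantile F (α + ε) ≤ ((t - δ : ℝ) : EReal) :=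
        quantile_le_of_mem (by rw [hα]; simp)
      have h2 : cdfQuantile G α ≤ (t : EReal) := by
        refine (h α).2.trans ?_
        calc cdfQuantile F (α + ε) + (δ : EReal) ≤ ((t - δ : ℝ) : EReal) + (δ : EReal) := by
              exact add_le_add_left h1 _
          _ = (t : EReal) := by
              rw [← EReal.coe_add]; norm_num
      exact absurd (le_cdf_of_quantile_le hG hαpos h2) (not_le.2 hc)
    · by_contra hc
      push_neg at hc
      set α := G t with hα
      have hβpos : 0 < α - ε := lt_of_le_of_lt (hF.nonneg (t + δ)) (by linarith)
      have h1 : cdfQuantile G α ≤ (t : EReal) := quantile_le_of_mem le_rfl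
      have h2 : cdfQuantile F (α - ε) ≤ ((t + δ : ℝ) : EReal) := by
        have h3 := (h α).1.trans h1
        rw [EReal.sub_le_iff_le_add (Or.inl (EReal.coe_ne_bot δ))
          (Or.inl (EReal.coe_ne_top δ))] at h3
        calc cdfQuantile F (α - ε) ≤ (t : EReal) + (δ : EReal) := h3
          _ = ((t + δ : ℝ) : EReal) := by norm_cast
      exact absurd (le_cdf_of_quantile_le hF hβpos h2) (not_le.2 (by linarith))

theorem levyGauge_le_iff_quantiles (F G : ℝ → ℝ) (hF : IsCDF F) (hG : IsCDF G)
    (ε δ : ℝ) (hε : 0 ≤ ε) (hδ : 0 ≤ δ) :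
    (levyGauge δ F G ≤ ε ↔
      ∀ α : ℝ, cdfQuantile F (α - ε) - (δ : EReal) ≤ cdfQuantile G α ∧
        cdfQuantile G α ≤ cdfQuantile F (α + ε) + (δ : EReal)) ∧
    levyGauge δ F G =
      sInf {ε' : ℝ | 0 ≤ ε' ∧ ∀ α : ℝ,
        cdfQuantile F (α - ε') - (δ : EReal) ≤ cdfQuantile G α ∧
          cdfQuantile G α ≤ cdfQuantile F (α + ε') + (δ : EReal)} := by
  set S : Set ℝ := {ε : ℝ | 0 ≤ ε ∧ ∀ t : ℝ, F (t - δ) - ε ≤ G t ∧ G t ≤ F (t + δ) + ε} with hS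
  have hSne : S.Nonempty := ⟨1, zero_le_one, fun t =>
    ⟨by linarith [hF.le_one (t - δ), hG.nonneg t], by linarith [hG.le_one t, hF.nonneg (t + δ)]⟩⟩
  have hSbd : BddBelow S := ⟨0, fun x hx => hx.1⟩
  have hmem : sInf S ∈ S := by
    refine ⟨le_csInf hSne (fun x hx => hx.1), fun t => ⟨?_, ?_⟩⟩
    · have : F (t - δ) - G t ≤ sInf S := le_csInf hSne (fun x hx => by linarith [(hx.2 t).1])
      linarith
    · have : G t - F (t + δ) ≤ sInf S := le_csInf hSne (fun x hx => by linarith [(hx.2 t).2])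
      linarith
  have hiff : levyGauge δ F G ≤ ε ↔ ε ∈ S := by
    constructor
    · intro hle
      have hle' : sInf S ≤ ε := hle
      exact ⟨hε, fun t => ⟨by linarith [(hmem.2 t).1], by linarith [(hmem.2 t).2]⟩⟩
    · intro hx
      exact (csInf_le hSbd hx : sInf S ≤ ε)
  have hSeq : S = {ε' : ℝ | 0 ≤ ε' ∧ ∀ α : ℝ,
      cdfQuantile F (α - ε') - (δ : EReal) ≤ cdfQuantile G α ∧
        cdfQuantile G α ≤ cdfQuantile F (α + ε') + (δ : EReal)} := by
    ext ε'
    exact and_congr_right (fun hε' => cdf_cond_iff_quantile_cond hF hG hε' hδ)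
  refine ⟨hiff.trans ⟨fun hx => (cdf_cond_iff_quantile_cond hF hG hε hδ).1 hx.2,
    fun hq => ⟨hε, (cdf_cond_iff_quantile_cond hF hG hε hδ).2 hq⟩⟩, ?_⟩
  rw [levyGauge, ← hS, hSeq]
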